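/- Let V be a two-mode covariance matrix, let ν, μ be positive reals, and let S be a 4×4 real matrix with S 𝒥 Sᵀ = 𝒥 and S (Λ V Λ) Sᵀ = diag(ν, ν, μ, μ), where Λ = diag(1, −1, 1, 1). If W_a and W_b are the upper-left and upper-right 2×2 blocks of S, then |det W_b − det W_a| ≤ ν. -/

import Mathlib

open Matrix Real ComplexOrder

noncomputable section

def J2 : Matrix (Fin 2) (Fin 2) ℝ := !![0, 1; -1, 0]
def Z2 : Matrix (Fin 2) (Fin 2) ℝ := !![1, 0; 0, -1]
def J4 : Matrix (Fin 2 ⊕ Fin 2) (Fin 2 ⊕ Fin 2) ℝ := fromBlocks J2 0 0 J2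

/-- A two-mode covariance matrix: real symmetric with `V + i𝒥 ⪰ 0`. -/
def IsCovMat (V : Matrix (Fin 2 ⊕ Fin 2) (Fin 2 ⊕ Fin 2) ℝ) : Prop :=
  V.IsSymm ∧ (V.map (Complex.ofReal) + Complex.I • J4.map (Complex.ofReal)).PosSemidef

/-- Noise matrix N = Z A Z + Z C + Cᵀ Z + B of the Braunstein-Kimble protocol. -/
def noiseMat (V : Matrix (Fin 2 ⊕ Fin 2) (Fin 2 ⊕ Fin 2) ℝ) : Matrix (Fin 2) (Fin 2) ℝ :=
  Z2 * V.toBlocks₁₁ * Z2 + Z2 * V.toBlocks₁₂ + (V.toBlocks₁₂)ᵀ * Z2 + V.toBlocks₂₂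

/-- Coherent-state teleportation fidelity F = 2/√(4 + 2 Tr N + det N). -/
def Fid (V : Matrix (Fin 2 ⊕ Fin 2) (Fin 2 ⊕ Fin 2) ℝ) : ℝ :=
  2 / Real.sqrt (4 + 2 * (noiseMat V).trace + (noiseMat V).det)

def SigmaV (V : Matrix (Fin 2 ⊕ Fin 2) (Fin 2 ⊕ Fin 2) ℝ) : ℝ :=
  (V.toBlocks₁₁).det + (V.toBlocks₂₂).det - 2 * (V.toBlocks₁₂).det

/-- Lowest partially transposed symplectic eigenvalue ν. -/
def nuPT (V : Matrix (Fin 2 ⊕ Fin 2) (Fin 2 ⊕ Fin 2) ℝ) : ℝ :=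
  Real.sqrt ((SigmaV V - Real.sqrt ((SigmaV V)^2 - 4 * V.det)) / 2)

def LambdaPT : Matrix (Fin 2 ⊕ Fin 2) (Fin 2 ⊕ Fin 2) ℝ := fromBlocks Z2 0 0 1

lemma conj_J2 (M : Matrix (Fin 2) (Fin 2) ℝ) : M * J2 * Mᵀ = M.det • J2 := by
  ext i j
  fin_cases i <;> fin_cases j <;>
    simp [J2, Matrix.mul_apply, Fin.sum_univ_two, Matrix.det_fin_two] <;> ring

lemma Z2_J2_Z2 : Z2 * J2 * Z2 = -J2 := by
  have : Z2ᵀ = Z2 := by ext i j; fin_cases i <;> fin_cases j <;> simp [Z2]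
  have h := conj_J2 Z2
  rw [this] at h
  rw [h]
  have : Z2.det = -1 := by simp [Z2, Matrix.det_fin_two_of]
  rw [this]; simp

lemma LambdaPT_transpose : LambdaPTᵀ = LambdaPT := by
  have : Z2ᵀ = Z2 := by ext i j; fin_cases i <;> fin_cases j <;> simp [Z2]
  simp [LambdaPT, fromBlocks_transpose, this]

lemma map_conjT (M : Matrix (Fin 2 ⊕ Fin 2) (Fin 2 ⊕ Fin 2) ℝ) :
    (M.map Complex.ofReal)ᴴ = Mᵀ.map Complex.ofReal := by
  ext i j
  simp [Matrix.conjTranspose_apply, Complex.conj_ofReal]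

lemma map_mul' (M N : Matrix (Fin 2 ⊕ Fin 2) (Fin 2 ⊕ Fin 2) ℝ) :
    (M * N).map Complex.ofReal = M.map Complex.ofReal * N.map Complex.ofReal := by
  ext i j
  simp [Matrix.mul_apply, Matrix.map_apply]

/-- Heisenberg bound |det W_b − det W_a| ≤ ν for the blocks of a
symplectic matrix diagonalizing the partially transposed covariance matrix. -/
theorem epsilon_bounded_by_nu (V : Matrix (Fin 2 ⊕ Fin 2) (Fin 2 ⊕ Fin 2) ℝ)
    (hV : IsCovMat V) (ν μ : ℝ) (hν : 0 < ν) (hμ : 0 < μ)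
    (S : Matrix (Fin 2 ⊕ Fin 2) (Fin 2 ⊕ Fin 2) ℝ)
    (hS : S * J4 * Sᵀ = J4)
    (hdiag : S * (LambdaPT * V * LambdaPT) * Sᵀ =
      fromBlocks (ν • (1 : Matrix (Fin 2) (Fin 2) ℝ)) 0 0 (μ • (1 : Matrix (Fin 2) (Fin 2) ℝ))) :
    |(S.toBlocks₁₂).det - (S.toBlocks₁₁).det| ≤ ν := by
  set ε : ℝ := (S.toBlocks₁₂).det - (S.toBlocks₁₁).det with hεdef
  set T : Matrix (Fin 2 ⊕ Fin 2) (Fin 2 ⊕ Fin 2) ℝ := S * (LambdaPT * J4 * LambdaPT) * Sᵀ with hT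
  -- 11-block of T
  have hT11 : ∀ i j, T (Sum.inl i) (Sum.inl j) = ε * J2 i j := by
    have hL : LambdaPT * J4 * LambdaPT = fromBlocks (-J2) 0 0 J2 := by
      simp [LambdaPT, J4, fromBlocks_multiply, Z2_J2_Z2]
    have hS' : S = fromBlocks S.toBlocks₁₁ S.toBlocks₁₂ S.toBlocks₂₁ S.toBlocks₂₂ :=
      (fromBlocks_toBlocks S).symm
    have : T = fromBlocks
        (S.toBlocks₁₁ * (-J2) * S.toBlocks₁₁ᵀ + S.toBlocks₁₂ * J2 * S.toBlocks₁₂ᵀ)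
        (S.toBlocks₁₁ * (-J2) * S.toBlocks₂₁ᵀ + S.toBlocks₁₂ * J2 * S.toBlocks₂₂ᵀ)
        (S.toBlocks₂₁ * (-J2) * S.toBlocks₁₁ᵀ + S.toBlocks₂₂ * J2 * S.toBlocks₁₂ᵀ)
        (S.toBlocks₂₁ * (-J2) * S.toBlocks₂₁ᵀ + S.toBlocks₂₂ * J2 * S.toBlocks₂₂ᵀ) := by
      rw [hT, hL]
      conv_lhs => rw [hS']
      rw [fromBlocks_transpose, fromBlocks_multiply, fromBlocks_multiply]
      simp [Matrix.mul_assoc]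
    intro i j
    have e1 : S.toBlocks₁₁ * -J2 * S.toBlocks₁₁ᵀ = -((S.toBlocks₁₁).det • J2) := by
      rw [Matrix.mul_neg, Matrix.neg_mul, conj_J2]
    have e2 : S.toBlocks₁₂ * J2 * S.toBlocks₁₂ᵀ = (S.toBlocks₁₂).det • J2 := conj_J2 _
    rw [this, fromBlocks_apply₁₁, e1, e2]
    simp [Matrix.add_apply, Matrix.neg_apply, Matrix.smul_apply, smul_eq_mul, hεdef]
    ring
  -- PSD matrix
  have hP := hV.2
  set Sc : Matrix (Fin 2 ⊕ Fin 2) (Fin 2 ⊕ Fin 2) ℂ := (S * LambdaPT).map Complex.ofReal with hSc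
  have hPSD := hP.mul_mul_conjTranspose_same Sc
  have hM : (Sc * (V.map Complex.ofReal + Complex.I • J4.map Complex.ofReal) * Scᴴ)
      = (fromBlocks (ν • (1 : Matrix (Fin 2) (Fin 2) ℝ)) 0 0
          (μ • (1 : Matrix (Fin 2) (Fin 2) ℝ))).map Complex.ofReal
        + Complex.I • T.map Complex.ofReal := by
    rw [hSc, map_conjT, Matrix.transpose_mul, LambdaPT_transpose]
    rw [Matrix.mul_add, Matrix.add_mul, Matrix.mul_smul, Matrix.smul_mul]
    rw [← map_mul', ← map_mul', ← map_mul', ← map_mul']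
    congr 1
    · rw [← hdiag]; congr 1; simp only [Matrix.mul_assoc]
    · congr 1; rw [hT]; congr 1; simp only [Matrix.mul_assoc]
  rw [hM] at hPSD
  -- test vector
  set s : ℝ := if 0 ≤ ε then 1 else -1 with hs
  set x : (Fin 2 ⊕ Fin 2) → ℂ := Sum.elim ![1, Complex.I * s] 0 with hx
  have hq := hPSD.dotProduct_mulVec_nonneg x
  have hqval : star x ⬝ᵥ ((fromBlocks (ν • (1 : Matrix (Fin 2) (Fin 2) ℝ)) 0 0
          (μ • (1 : Matrix (Fin 2) (Fin 2) ℝ))).map Complex.ofReal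
        + Complex.I • T.map Complex.ofReal) *ᵥ x = ((2 * ν - 2 * (s * ε) : ℝ) : ℂ) := by
    have hT01 := hT11 0 1
    have hT10 := hT11 1 0
    have hT00 := hT11 0 0
    have hT11' := hT11 1 1
    simp only [J2, Matrix.cons_val', Matrix.cons_val_zero, Matrix.cons_val_one,
      Matrix.head_cons, Matrix.empty_val', Matrix.cons_val_fin_one, Matrix.head_fin_const] at hT01 hT10 hT00 hT11'
    simp [hx, dotProduct, Matrix.mulVec, Fintype.sum_sum_type, Fin.sum_univ_two,
      Matrix.map_apply, fromBlocks_apply₁₁, fromBlocks_apply₁₂, fromBlocks_apply₂₁,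
      fromBlocks_apply₂₂, hT00, hT01, hT10, hT11', Matrix.one_apply, Complex.conj_ofReal]
    have hs2 : (s:ℂ)^2 = 1 := by
      rw [hs]; split_ifs <;> push_cast <;> norm_num
    push_cast
    ring_nf
    simp [hs2, Complex.ext_iff]
    ring_nf
  rw [hqval] at hq
  rw [Complex.zero_le_real] at hq
  have hsε : s * ε = |ε| := by
    rw [hs]; rcases le_or_gt 0 ε with h | h
    · rw [if_pos h, one_mul, abs_of_nonneg h]
    · rw [if_neg (not_le.mpr h), neg_one_mul, abs_of_neg h]
  rw [hsε] at hq
  linarith
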